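/- Let x be a complex number with 0 < |x| ≤ 1, let F(T) = Σ_{m=0}^{d} s_m T^m be a polynomial whose coefficients s_m are real, and suppose F(\bar{x}) = 0. Then |x^d · F(x^{−1})| ≤ (Σ_{m=0}^{d} m·|s_m|)·(1 − |x|²). -/

import Mathlib

open Finset

lemma aux_pow_sub_pow (u v : ℂ) (m : ℕ) (hu : 1 ≤ ‖u‖)
    (hv : ‖v‖ ≤ 1) :
    ‖u ^ m - v ^ m‖ ≤ m * ‖u‖ ^ (m - 1) * ‖u - v‖ := by
  have h := geom_sum₂_mul u v m
  calc ‖u ^ m - v ^ m‖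
      = ‖∑ i ∈ range m, u ^ i * v ^ (m - 1 - i)‖ * ‖u - v‖ := by
        rw [← h, norm_mul]
    _ ≤ (m * ‖u‖ ^ (m - 1)) * ‖u - v‖ := by
        apply mul_le_mul_of_nonneg_right _ (norm_nonneg _)
        calc ‖∑ i ∈ range m, u ^ i * v ^ (m - 1 - i)‖
            ≤ ∑ i ∈ range m, ‖u ^ i * v ^ (m - 1 - i)‖ :=
              norm_sum_le _ _
          _ ≤ ∑ _i ∈ range m, ‖u‖ ^ (m - 1) := by
              apply sum_le_sum
              intro i hi
              rw [norm_mul, norm_pow, norm_pow]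
              have h1 : ‖v‖ ^ (m - 1 - i) ≤ 1 :=
                pow_le_one₀ (norm_nonneg _) hv
              have h2 : ‖u‖ ^ i ≤ ‖u‖ ^ (m - 1) :=
                pow_le_pow_right₀ hu (by simp at hi; omega)
              calc ‖u‖ ^ i * ‖v‖ ^ (m - 1 - i)
                  ≤ ‖u‖ ^ i * 1 :=
                    mul_le_mul_of_nonneg_left h1 (by positivity)
                _ = ‖u‖ ^ i := mul_one _
                _ ≤ ‖u‖ ^ (m - 1) := h2
          _ = m * ‖u‖ ^ (m - 1) := by
              rw [sum_const, card_range, nsmul_eq_mul]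

/-- Let `x ∈ ℂ` with `0 < |x| ≤ 1` and let `F(T) = Σ_{m=0}^d s_m T^m` be a polynomial
with real coefficients such that `F(conj x) = 0`. Then
`|x^d · F(x⁻¹)| ≤ (Σ_{m=0}^d m·|s_m|)·(1 - |x|²)`. -/
theorem stmt_14 (x : ℂ) (hx0 : x ≠ 0) (hx1 : ‖x‖ ≤ 1)
    (d : ℕ) (s : ℕ → ℝ)
    (hroot : ∑ m ∈ range (d + 1), (s m : ℂ) * (starRingEnd ℂ x) ^ m = 0) :
    ‖x ^ d * ∑ m ∈ range (d + 1), (s m : ℂ) * (x⁻¹) ^ m‖ ≤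
      (∑ m ∈ range (d + 1), (m : ℝ) * |s m|) * (1 - ‖x‖ ^ 2) := by
  set a := ‖x‖ with ha
  have ha0 : 0 < a := norm_pos_iff.mpr hx0
  set c := starRingEnd ℂ x with hc
  have hcabs : ‖c‖ = a := Complex.norm_conj x
  have huabs : ‖x⁻¹‖ = a⁻¹ := norm_inv x
  have hu1 : 1 ≤ ‖x⁻¹‖ := by
    rw [huabs]; exact (one_le_inv₀ ha0).mpr hx1
  -- |x⁻¹ - conj x| = a⁻¹ (1 - a²)
  have hdiff : ‖x⁻¹ - c‖ = a⁻¹ * (1 - a ^ 2) := by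
    have : x⁻¹ - c = x⁻¹ * (1 - x * c) := by
      field_simp
    rw [this, norm_mul, huabs]
    congr 1
    have : x * c = (Complex.normSq x : ℂ) := Complex.mul_conj x
    rw [this]
    have hns : Complex.normSq x = a ^ 2 := by
      rw [ha, Complex.sq_norm]
    rw [hns]
    have h1 : (1 : ℂ) - (a ^ 2 : ℝ) = ((1 - a ^ 2 : ℝ) : ℂ) := by push_cast; ring
    rw [h1, Complex.norm_real, Real.norm_eq_abs, abs_of_nonneg]
    nlinarith [sq_nonneg a, pow_le_one₀ (le_of_lt ha0) hx1 (n := 2)]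
  -- rewrite using hroot
  have key : ∑ m ∈ range (d + 1), (s m : ℂ) * (x⁻¹) ^ m
      = ∑ m ∈ range (d + 1), (s m : ℂ) * ((x⁻¹) ^ m - c ^ m) := by
    rw [← sub_zero (∑ m ∈ range (d + 1), (s m : ℂ) * (x⁻¹) ^ m), ← hroot, ← sum_sub_distrib]
    exact sum_congr rfl fun m _ => by ring
  rw [key, mul_sum]
  calc ‖∑ m ∈ range (d + 1), x ^ d * ((s m : ℂ) * ((x⁻¹) ^ m - c ^ m))‖
      ≤ ∑ m ∈ range (d + 1), ‖x ^ d * ((s m : ℂ) * ((x⁻¹) ^ m - c ^ m))‖ :=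
        norm_sum_le _ _
    _ ≤ ∑ m ∈ range (d + 1), (m : ℝ) * |s m| * (1 - a ^ 2) := by
        apply sum_le_sum
        intro m hm
        have hmd : m ≤ d := by simp at hm; omega
        rw [norm_mul, norm_mul, norm_pow, Complex.norm_real]
        rcases Nat.eq_zero_or_pos m with h0 | hmpos
        · simp [h0]
        have hbound := aux_pow_sub_pow x⁻¹ c m hu1 (by rw [hcabs]; exact hx1)
        rw [huabs, hdiff] at hbound
        calc a ^ d * (|s m| * ‖(x⁻¹) ^ m - c ^ m‖)
            ≤ a ^ d * (|s m| * ((m : ℝ) * (a⁻¹) ^ (m - 1) * (a⁻¹ * (1 - a ^ 2)))) := by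
              apply mul_le_mul_of_nonneg_left _ (by positivity)
              exact mul_le_mul_of_nonneg_left hbound (abs_nonneg _)
          _ = (m : ℝ) * |s m| * (1 - a ^ 2) * (a ^ d / a ^ m) := by
              have hm1 : a ^ m = a ^ (m - 1) * a := by
                rw [← pow_succ]
                congr 1
                omega
              rw [hm1, inv_pow]
              field_simp
          _ ≤ (m : ℝ) * |s m| * (1 - a ^ 2) * 1 := by
              apply mul_le_mul_of_nonneg_left _ ?_
              · rw [div_le_one (by positivity)]
                exact pow_le_pow_of_le_one (le_of_lt ha0) hx1 hmd
              · have : 1 - a ^ 2 ≥ 0 := by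
                  nlinarith [pow_le_one₀ (le_of_lt ha0) hx1 (n := 2)]
                positivity
          _ = (m : ℝ) * |s m| * (1 - a ^ 2) := mul_one _
    _ = (∑ m ∈ range (d + 1), (m : ℝ) * |s m|) * (1 - a ^ 2) := by
        rw [sum_mul]
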